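/- For every weighted automaton 𝒜 over A and S there exist a finite index set K, scalars l_k, r_k ∈ S for k ∈ K, and automata 𝒜_k for k ∈ K, each of which is either a loopback automaton or a loopback-with-prelude automaton, such that the diverging behavior of 𝒜 equals Σ_{k∈K} l_k·p_k·r_k pointwise, where p_k is the diverging behavior of 𝒜_k (that is, 𝒜(w,n) = Σ_{k∈K} l_k·𝒜_k(w,n)·r_k for every infinite word w and every n ∈ ℕ). -/

import Mathlib

open scoped Classical

/-- A weighted automaton over alphabet `A` and semiring `S`: a finite set of
states `Q`, initial distribution `I`, final distribution `F`, and a transition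
matrix `M a` for each letter `a`. -/
structure WA (A : Type) (S : Type) [Semiring S] where
  Q : Type
  [fin : Fintype Q]
  [deq : DecidableEq Q]
  I : Q → S
  F : Q → S
  M : A → Matrix Q Q S

attribute [instance] WA.fin WA.deq

variable {A S : Type} [Semiring S]

/-- The product `M(a₀)·…·M(a_{n−1})` over a finite word (identity for `[]`). -/
def Mword (𝒜 : WA A S) (w : List A) : Matrix 𝒜.Q 𝒜.Q S :=
  (w.map 𝒜.M).prod

/-- The converging behavior `⟦𝒜⟧(w) = Σ_{i,f} I(i)·M(w)_{i,f}·F(f)`. -/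
def convB (𝒜 : WA A S) (w : List A) : S :=
  ∑ i, ∑ f, 𝒜.I i * Mword 𝒜 w i f * 𝒜.F f

/-- The first `n` letters of an infinite word. -/
def wpre (w : ℕ → A) (n : ℕ) : List A := (List.range n).map w

/-- A pair of states `(i,f)` is activated by the infinite word `w` if for
every `n₀` there is `n ≥ n₀` with `M(w[0..n))_{i,f} ≠ 0`. -/
def Activated (𝒜 : WA A S) (w : ℕ → A) (i f : 𝒜.Q) : Prop :=
  ∀ n₀ : ℕ, ∃ n, n₀ ≤ n ∧ Mword 𝒜 (wpre w n) i f ≠ 0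

/-- The diverging behavior `𝒜(w,n) = Σ_{(i,f) activated} I(i)·M(w[0..n))_{i,f}·F(f)`. -/
noncomputable def divB (𝒜 : WA A S) (w : ℕ → A) (n : ℕ) : S :=
  ∑ p : 𝒜.Q × 𝒜.Q,
    if Activated 𝒜 w p.1 p.2 then
      𝒜.I p.1 * Mword 𝒜 (wpre w n) p.1 p.2 * 𝒜.F p.2
    else 0

/-- Product of converging power series: sum over all splittings of the word. -/
def cmul (x y : List A → S) : List A → S :=
  fun w => ∑ k ∈ Finset.range (w.length + 1), x (w.take k) * y (w.drop k)

/-- The multiplicative unit: 1 on the empty word, 0 elsewhere. -/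
def cone : List A → S := fun w => match w with | [] => 1 | _ => 0

/-- Powers of a converging power series. -/
def cpow (x : List A → S) : ℕ → (List A → S)
  | 0 => cone
  | n + 1 => cmul x (cpow x n)

/-- The star `x* = Σ_{k ≥ 0} x^k`; for proper `x` only the terms with
`k ≤ |w|` can contribute on the word `w`. -/
def cstar (x : List A → S) : List A → S :=
  fun w => ∑ k ∈ Finset.range (w.length + 1), cpow x k w

/-- `Rat*(S,A)`: the smallest set of converging power series containing all
finitely supported ones and closed under sum, product, and star of proper
members. -/
inductive IsRat : (List A → S) → Prop
  | finite (x : List A → S) (h : (Function.support x).Finite) : IsRat x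
  | add {x y : List A → S} : IsRat x → IsRat y → IsRat (x + y)
  | mul {x y : List A → S} : IsRat x → IsRat y → IsRat (cmul x y)
  | star {x : List A → S} : IsRat x → x [] = 0 → IsRat (cstar x)

/-- `χ(w,x) = 1` iff arbitrarily long prefixes of `w` have nonzero coefficient. -/
noncomputable def chi (w : ℕ → A) (x : List A → S) : S :=
  if ∀ n₀ : ℕ, ∃ n, n₀ ≤ n ∧ x (wpre w n) ≠ 0 then 1 else 0

/-- `s^ω(w,n) = s*(w[0..n))·χ(w,s*)`. -/
noncomputable def omegaPS (s : List A → S) : (ℕ → A) → ℕ → S :=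
  fun w n => cstar s (wpre w n) * chi w (cstar s)

/-- The conjoin `(x ⋆ y)(w,n) = (x·y*)(w[0..n))·χ(w,x·y*)`. -/
noncomputable def conjoinPS (x y : List A → S) : (ℕ → A) → ℕ → S :=
  fun w n => cmul x (cstar y) (wpre w n) * chi w (cmul x (cstar y))

/-- `Rat^ω(S,A)`: the smallest set of diverging power series closed under
finite sums and left/right scalar multiplication containing all `x ⋆ y` and
`z^ω` for proper rational `x`, `y`, `z`. -/
inductive IsRatOmega : ((ℕ → A) → ℕ → S) → Prop
  | zero : IsRatOmega (fun _ _ => 0)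
  | add {p q : (ℕ → A) → ℕ → S} :
      IsRatOmega p → IsRatOmega q → IsRatOmega (fun w n => p w n + q w n)
  | smul_left (s : S) {p : (ℕ → A) → ℕ → S} :
      IsRatOmega p → IsRatOmega (fun w n => s * p w n)
  | smul_right (s : S) {p : (ℕ → A) → ℕ → S} :
      IsRatOmega p → IsRatOmega (fun w n => p w n * s)
  | conjoin {x y : List A → S} :
      IsRat x → x [] = 0 → IsRat y → y [] = 0 → IsRatOmega (conjoinPS x y)
  | omega {z : List A → S} : IsRat z → z [] = 0 → IsRatOmega (omegaPS z)

/-- Scalar multiples `l·𝒜·r` of an automaton. -/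
def smulWA (l : S) (𝒜 : WA A S) (r : S) : WA A S where
  Q := 𝒜.Q
  I := fun i => l * 𝒜.I i
  F := fun f => 𝒜.F f * r
  M := 𝒜.M

/-- The disjoint-union (sum) automaton. -/
def addWA (𝒜 ℬ : WA A S) : WA A S where
  Q := 𝒜.Q ⊕ ℬ.Q
  I := Sum.elim 𝒜.I ℬ.I
  F := Sum.elim 𝒜.F ℬ.F
  M := fun a => Matrix.fromBlocks (𝒜.M a) 0 0 (ℬ.M a)

/-- `𝒜` is normalized with initial state `qI` and final state `qF`. -/
def IsNormalizedAt (𝒜 : WA A S) (qI qF : 𝒜.Q) : Prop :=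
  qI ≠ qF ∧ (∀ i, 𝒜.I i = if i = qI then 1 else 0) ∧
    (∀ f, 𝒜.F f = if f = qF then 1 else 0) ∧
    (∀ (a : A) (i : 𝒜.Q), 𝒜.M a i qI = 0) ∧ (∀ (a : A) (j : 𝒜.Q), 𝒜.M a qF j = 0)

/-- `𝒜` is normalized. -/
def IsNormalized (𝒜 : WA A S) : Prop := ∃ qI qF, IsNormalizedAt 𝒜 qI qF

/-- `𝒜` is a loopback automaton with loopback state `q₀`. -/
def IsLoopbackAt (𝒜 : WA A S) (q₀ : 𝒜.Q) : Prop :=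
  (∀ i, 𝒜.I i = if i = q₀ then 1 else 0) ∧ (∀ f, 𝒜.F f = if f = q₀ then 1 else 0)

/-- `𝒜` is a loopback automaton. -/
def IsLoopback (𝒜 : WA A S) : Prop := ∃ q₀, IsLoopbackAt 𝒜 q₀

/-- `𝒜` is a loopback automaton with prelude. -/
def IsLoopbackWithPrelude (𝒜 : WA A S) : Prop :=
  ∃ qI qF, qI ≠ qF ∧ (∀ i, 𝒜.I i = if i = qI then 1 else 0) ∧
    (∀ f, 𝒜.F f = if f = qF then 1 else 0) ∧
    (∀ (a : A) (i : 𝒜.Q), 𝒜.M a i qI = 0)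

/-- `𝒜` is a bridge automaton. -/
def IsBridge (𝒜 : WA A S) : Prop :=
  ∃ qI qF, qI ≠ qF ∧ (∀ i, 𝒜.I i = if i = qI then 1 else 0) ∧
    (∀ f, 𝒜.F f = if f = qF then 1 else 0)

/-- The unroll of a loopback automaton with loopback state `q₀`: adjoin a
fresh final state, redirect all edges ending at `q₀` to it. -/
def unroll (L : WA A S) (q₀ : L.Q) : WA A S where
  Q := L.Q ⊕ Unit
  I := Sum.elim (fun i => if i = q₀ then 1 else 0) (fun _ => 0)
  F := Sum.elim (fun _ => 0) (fun _ => 1)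
  M := fun a => Matrix.of fun p q =>
    match p, q with
    | Sum.inl i, Sum.inl j => if j = q₀ then 0 else L.M a i j
    | Sum.inl i, Sum.inr _ => L.M a i q₀
    | Sum.inr _, _ => 0

/-- The conjoin `X ⋆ Y` of two normalized automata (initial/final states
`xI`, `xF` and `yI`, `yF`): the disjoint sum of `X` minus its final state and
the roll of `Y`, with edges of `X` ending at `xF` redirected to the loopback
state `yI`. -/
def conjoinWA (X : WA A S) (xI xF : X.Q) (Y : WA A S) (yI yF : Y.Q) : WA A S where
  Q := {i : X.Q // i ≠ xF} ⊕ {j : Y.Q // j ≠ yF}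
  I := Sum.elim (fun i => if i.1 = xI then 1 else 0) (fun _ => 0)
  F := Sum.elim (fun _ => 0) (fun j => if j.1 = yI then 1 else 0)
  M := fun a => Matrix.of fun p q =>
    match p, q with
    | Sum.inl i, Sum.inl j => X.M a i.1 j.1
    | Sum.inl i, Sum.inr j => if j.1 = yI then X.M a i.1 xF else 0
    | Sum.inr _, Sum.inl _ => 0
    | Sum.inr i, Sum.inr j => if j.1 = yI then Y.M a i.1 yF else Y.M a i.1 j.1

/-- The finite slice `w[i..j)` of a biinfinite word. -/
def bpre (w : ℤ → A) (i j : ℤ) : List A :=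
  (List.range (j - i).toNat).map (fun k => w (i + k))

/-- A pair of states `(p,q)` is activated by the biinfinite word `w` if for
all `i₀ ≤ j₀` there are `i ≤ i₀` and `j ≥ j₀` with `M(w[i..j))_{p,q} ≠ 0`. -/
def BActivated (𝒜 : WA A S) (w : ℤ → A) (p q : 𝒜.Q) : Prop :=
  ∀ i₀ j₀ : ℤ, i₀ ≤ j₀ → ∃ i ≤ i₀, ∃ j, j₀ ≤ j ∧ Mword 𝒜 (bpre w i j) p q ≠ 0

/-- The bidiverging behavior
`𝒜(w,i,n) = Σ_{(p,q) activated} I(p)·M(w[i..i+n))_{p,q}·F(q)`. -/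
noncomputable def bdivB (𝒜 : WA A S) (w : ℤ → A) (i : ℤ) (n : ℕ) : S :=
  ∑ p : 𝒜.Q × 𝒜.Q,
    if BActivated 𝒜 w p.1 p.2 then
      𝒜.I p.1 * Mword 𝒜 (bpre w i (i + n)) p.1 p.2 * 𝒜.F p.2
    else 0

/-- `χ_ζ(w,x) = 1` iff arbitrarily long slices of `w` have nonzero coefficient. -/
noncomputable def chiZ (w : ℤ → A) (x : List A → S) : S :=
  if ∀ i₀ j₀ : ℤ, i₀ ≤ j₀ → ∃ i ≤ i₀, ∃ j, j₀ ≤ j ∧ x (bpre w i j) ≠ 0 then 1 else 0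

/-- `s^ζ(w,i,n) = s*(w[i..i+n))·χ_ζ(w,s*)`. -/
noncomputable def zetaPS (s : List A → S) : (ℤ → A) → ℤ → ℕ → S :=
  fun w i n => cstar s (bpre w i (i + n)) * chiZ w (cstar s)

/-- The conjoin `(x ⋆ m ⋆ y)(w,i,n) = (x*·m·y*)(w[i..i+n))·χ_ζ(w,x*·m·y*)`. -/
noncomputable def conjoin3PS (x m y : List A → S) : (ℤ → A) → ℤ → ℕ → S :=
  fun w i n =>
    cmul (cstar x) (cmul m (cstar y)) (bpre w i (i + n)) *
      chiZ w (cmul (cstar x) (cmul m (cstar y)))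

/-- `Rat^ζ(S,A)`: the smallest set of bidiverging power series closed under
finite sums and left/right scalar multiplication containing all `x ⋆ m ⋆ y`
and `z^ζ` for proper rational `x`, `m`, `y`, `z`. -/
inductive IsRatZeta : ((ℤ → A) → ℤ → ℕ → S) → Prop
  | zero : IsRatZeta (fun _ _ _ => 0)
  | add {p q : (ℤ → A) → ℤ → ℕ → S} :
      IsRatZeta p → IsRatZeta q → IsRatZeta (fun w i n => p w i n + q w i n)
  | smul_left (s : S) {p : (ℤ → A) → ℤ → ℕ → S} :
      IsRatZeta p → IsRatZeta (fun w i n => s * p w i n)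
  | smul_right (s : S) {p : (ℤ → A) → ℤ → ℕ → S} :
      IsRatZeta p → IsRatZeta (fun w i n => p w i n * s)
  | conjoin {x m y : List A → S} :
      IsRat x → x [] = 0 → IsRat m → m [] = 0 → IsRat y → y [] = 0 →
      IsRatZeta (conjoin3PS x m y)
  | zeta {z : List A → S} : IsRat z → z [] = 0 → IsRatZeta (zetaPS z)

/-- The conjoin `X ⋆ M̂ ⋆ Y` of three normalized automata: the roll of `X`
(loopback `xI`), the middle of `M̂`, and the roll of `Y` (loopback `yI`), with
the edges of `M̂` leaving `mI` re-sourced at `xI`, the edges of `M̂` entering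
`mF` re-targeted at `yI`, and direct `mI → mF` edges becoming `xI → yI`. -/
def conjoin3WA (X : WA A S) (xI xF : X.Q) (Mh : WA A S) (mI mF : Mh.Q)
    (Y : WA A S) (yI yF : Y.Q) : WA A S where
  Q := {i : X.Q // i ≠ xF} ⊕ ({k : Mh.Q // k ≠ mI ∧ k ≠ mF} ⊕ {j : Y.Q // j ≠ yF})
  I := Sum.elim (fun i => if i.1 = xI then 1 else 0) (fun _ => 0)
  F := Sum.elim (fun _ => 0) (Sum.elim (fun _ => 0) (fun j => if j.1 = yI then 1 else 0))
  M := fun a => Matrix.of fun p q =>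
    match p, q with
    | Sum.inl i, Sum.inl j => if j.1 = xI then X.M a i.1 xF else X.M a i.1 j.1
    | Sum.inl i, Sum.inr (Sum.inl k) => if i.1 = xI then Mh.M a mI k.1 else 0
    | Sum.inl i, Sum.inr (Sum.inr j) =>
        if i.1 = xI ∧ j.1 = yI then Mh.M a mI mF else 0
    | Sum.inr (Sum.inl _), Sum.inl _ => 0
    | Sum.inr (Sum.inl k), Sum.inr (Sum.inl l) => Mh.M a k.1 l.1
    | Sum.inr (Sum.inl k), Sum.inr (Sum.inr j) => if j.1 = yI then Mh.M a k.1 mF else 0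
    | Sum.inr (Sum.inr _), Sum.inl _ => 0
    | Sum.inr (Sum.inr _), Sum.inr (Sum.inl _) => 0
    | Sum.inr (Sum.inr i), Sum.inr (Sum.inr j) =>
        if j.1 = yI then Y.M a i.1 yF else Y.M a i.1 j.1

/-! ### Auxiliary constructions for Statement 9 -/

/-- The loopback automaton obtained from `𝒜` by making `q` the unique
initial and final state. -/
def loopWA (𝒜 : WA A S) (q : 𝒜.Q) : WA A S where
  Q := 𝒜.Q
  I := fun p => if p = q then 1 else 0
  F := fun p => if p = q then 1 else 0
  M := 𝒜.M

/-- The loopback-with-prelude automaton for the pair `(i, f)`: a fresh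
initial state mimicking `i`, final state `f`. -/
def prelWA (𝒜 : WA A S) (i : 𝒜.Q) (f : 𝒜.Q) : WA A S where
  Q := 𝒜.Q ⊕ Unit
  I := Sum.elim (fun _ => 0) (fun _ => 1)
  F := Sum.elim (fun q => if q = f then 1 else 0) (fun _ => 0)
  M := fun a => Matrix.of fun p q =>
    match p, q with
    | Sum.inl p, Sum.inl q => 𝒜.M a p q
    | Sum.inr _, Sum.inl q => 𝒜.M a i q
    | _, Sum.inr _ => 0

lemma prelWA_M_ll (𝒜 : WA A S) (i f : 𝒜.Q) (a : A) (p q : 𝒜.Q) :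
    (prelWA 𝒜 i f).M a (Sum.inl p) (Sum.inl q) = 𝒜.M a p q := rfl

lemma prelWA_M_rl (𝒜 : WA A S) (i f : 𝒜.Q) (a : A) (u : Unit) (q : 𝒜.Q) :
    (prelWA 𝒜 i f).M a (Sum.inr u) (Sum.inl q) = 𝒜.M a i q := rfl

lemma prelWA_M_r (𝒜 : WA A S) (i f : 𝒜.Q) (a : A) (p : 𝒜.Q ⊕ Unit) (u : Unit) :
    (prelWA 𝒜 i f).M a p (Sum.inr u) = 0 := by cases p <;> rfl

lemma Mword_nil (𝒜 : WA A S) : Mword 𝒜 [] = 1 := rfl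

lemma Mword_cons (𝒜 : WA A S) (a : A) (w : List A) :
    Mword 𝒜 (a :: w) = 𝒜.M a * Mword 𝒜 w := by
  simp [Mword]

lemma Mword_prelWA_ll (𝒜 : WA A S) (i f : 𝒜.Q) (w : List A) (p q : 𝒜.Q) :
    Mword (prelWA 𝒜 i f) w (Sum.inl p) (Sum.inl q) = Mword 𝒜 w p q := by
  induction w generalizing p with
  | nil =>
    show (1 : Matrix (𝒜.Q ⊕ Unit) (𝒜.Q ⊕ Unit) S) (Sum.inl p) (Sum.inl q) = _
    simp [Mword_nil, Matrix.one_apply, Sum.inl.injEq]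
  | cons a w ih =>
    rw [Mword_cons, Mword_cons]
    erw [Matrix.mul_apply, Matrix.mul_apply]
    erw [Fintype.sum_sum_type]
    simp [prelWA_M_ll, prelWA_M_r, ih]

lemma Mword_prelWA (𝒜 : WA A S) (i f : 𝒜.Q) (hif : i ≠ f) (w : List A) :
    Mword (prelWA 𝒜 i f) w (Sum.inr ()) (Sum.inl f) = Mword 𝒜 w i f := by
  cases w with
  | nil =>
    rw [Mword_nil, Mword_nil, Matrix.one_apply_ne hif]
    exact Matrix.one_apply_ne (i := (Sum.inr () : (prelWA 𝒜 i f).Q))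
      (j := Sum.inl f) (by intro h; cases h)
  | cons a w =>
    rw [Mword_cons, Mword_cons]
    erw [Matrix.mul_apply, Matrix.mul_apply]
    erw [Fintype.sum_sum_type]
    simp [prelWA_M_rl, prelWA_M_r, Mword_prelWA_ll]

lemma Activated_prelWA (𝒜 : WA A S) (i f : 𝒜.Q) (hif : i ≠ f) (w : ℕ → A) :
    Activated (prelWA 𝒜 i f) w (Sum.inr ()) (Sum.inl f) ↔ Activated 𝒜 w i f := by
  simp only [Activated, Mword_prelWA 𝒜 i f hif]

lemma divB_loopWA (𝒜 : WA A S) (q : 𝒜.Q) (w : ℕ → A) (n : ℕ) :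
    divB (loopWA 𝒜 q) w n =
      if Activated 𝒜 w q q then Mword 𝒜 (wpre w n) q q else 0 := by
  have hA : ∀ p₁ p₂ : 𝒜.Q, Activated (loopWA 𝒜 q) w p₁ p₂ ↔ Activated 𝒜 w p₁ p₂ :=
    fun _ _ => Iff.rfl
  have hM : Mword (loopWA 𝒜 q) (wpre w n) = Mword 𝒜 (wpre w n) := rfl
  rw [divB]
  rw [Finset.sum_eq_single ((q, q) : (loopWA 𝒜 q).Q × (loopWA 𝒜 q).Q)]
  · simp only [hM]
    rw [if_congr (hA q q) rfl rfl]
    simp [loopWA]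
  · rintro ⟨p₁, p₂⟩ _ hp
    rcases (not_and_or.mp (by simpa [Prod.ext_iff] using hp)) with h | h
    · simp [loopWA, h]; intro _ _ h'; exact absurd h' h
    · simp [loopWA, h]; intro _ h' _; exact absurd h' h
  · intro h; exact absurd (Finset.mem_univ _) h

lemma divB_prelWA (𝒜 : WA A S) (i f : 𝒜.Q) (hif : i ≠ f) (w : ℕ → A) (n : ℕ) :
    divB (prelWA 𝒜 i f) w n =
      if Activated 𝒜 w i f then Mword 𝒜 (wpre w n) i f else 0 := by
  rw [divB]
  rw [Finset.sum_eq_single (((Sum.inr (), Sum.inl f)) : (prelWA 𝒜 i f).Q × (prelWA 𝒜 i f).Q)]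
  · rw [if_congr (Activated_prelWA 𝒜 i f hif w) rfl rfl,
      Mword_prelWA 𝒜 i f hif]
    simp [prelWA]
  · rintro ⟨p₁, p₂⟩ _ hp
    cases p₁ with
    | inl x => simp [prelWA]
    | inr u =>
      cases p₂ with
      | inl y =>
        by_cases hy : y = f
        · exact absurd (by simp [hy]) hp
        · simp [prelWA, hy]
      | inr u₂ => simp [prelWA]
  · intro h; exact absurd (Finset.mem_univ _) h

lemma loopWA_isLoopback (𝒜 : WA A S) (q : 𝒜.Q) : IsLoopback (loopWA 𝒜 q) :=
  ⟨q, fun _ => rfl, fun _ => rfl⟩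

lemma prelWA_isLoopbackWithPrelude (𝒜 : WA A S) (i f : 𝒜.Q) :
    IsLoopbackWithPrelude (prelWA 𝒜 i f) := by
  refine ⟨Sum.inr (), Sum.inl f, (by intro h; cases h), ?_, ?_, ?_⟩
  · rintro (x | u) <;> simp [prelWA]
  · rintro (x | u) <;> simp [prelWA]
  · rintro a (x | u) <;> rfl

/-- every automaton decomposes (for its diverging behavior) into
a weighted sum of loopback automata with or without prelude. -/
theorem decompose_into_loopback_with_or_without_prelude (A S : Type)
    [Semiring S] (𝒜 : WA A S) :
    ∃ (k : ℕ) (l r : Fin k → S) (B : Fin k → WA A S),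
      (∀ i, IsLoopback (B i) ∨ IsLoopbackWithPrelude (B i)) ∧
      ∀ (w : ℕ → A) (n : ℕ),
        divB 𝒜 w n = ∑ i, l i * divB (B i) w n * r i := by
  classical
  set e : Fin (Fintype.card (𝒜.Q × 𝒜.Q)) ≃ 𝒜.Q × 𝒜.Q :=
    (Fintype.equivFin (𝒜.Q × 𝒜.Q)).symm with he
  refine ⟨Fintype.card (𝒜.Q × 𝒜.Q), fun j => 𝒜.I (e j).1, fun j => 𝒜.F (e j).2,
    fun j => if (e j).1 = (e j).2 then loopWA 𝒜 (e j).1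
      else prelWA 𝒜 (e j).1 (e j).2, ?_, ?_⟩
  · intro j
    dsimp only
    by_cases h : (e j).1 = (e j).2
    · left; rw [if_pos h]; exact loopWA_isLoopback 𝒜 (e j).1
    · right; rw [if_neg h]; exact prelWA_isLoopbackWithPrelude 𝒜 (e j).1 (e j).2
  · intro w n
    have key : ∀ p : 𝒜.Q × 𝒜.Q,
        divB (if p.1 = p.2 then loopWA 𝒜 p.1 else prelWA 𝒜 p.1 p.2) w n =
          if Activated 𝒜 w p.1 p.2 then Mword 𝒜 (wpre w n) p.1 p.2 else 0 := by
      intro p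
      by_cases h : p.1 = p.2
      · rw [if_pos h, divB_loopWA, h]
      · rw [if_neg h, divB_prelWA 𝒜 p.1 p.2 h]
    calc divB 𝒜 w n
        = ∑ p : 𝒜.Q × 𝒜.Q, 𝒜.I p.1 *
            (if Activated 𝒜 w p.1 p.2 then Mword 𝒜 (wpre w n) p.1 p.2 else 0) *
            𝒜.F p.2 := by
          rw [divB]
          refine Finset.sum_congr rfl fun p _ => ?_
          rw [mul_ite, mul_zero, ite_mul, zero_mul]
      _ = ∑ j, 𝒜.I (e j).1 *
            (if Activated 𝒜 w (e j).1 (e j).2 then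
              Mword 𝒜 (wpre w n) (e j).1 (e j).2 else 0) * 𝒜.F (e j).2 :=
          (Equiv.sum_comp e fun p => 𝒜.I p.1 *
            (if Activated 𝒜 w p.1 p.2 then Mword 𝒜 (wpre w n) p.1 p.2 else 0) *
            𝒜.F p.2).symm
      _ = _ := by
          refine Finset.sum_congr rfl fun j _ => ?_
          rw [key (e j)]
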